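/- Let (M, τ) be a tracial W*-probability space with τ faithful, u ∈ M a unitary *-freely independent of a unital W*-subalgebra N, and E : M → N the τ-preserving conditional expectation. Then for any x, z ∈ N, E([z, u x u*]) = |τ(u)|² [z, x], where [a,b] = ab − ba. In particular if z commutes with x then E([z, u x u*]) = 0. -/

import Mathlib

/-- Free independence (in the sense of Voiculescu) of two subalgebras with respect
to a trace: alternating products of centered elements have zero trace. -/
def FreeIndep {M : Type*} [Ring M] [Algebra ℂ M] (τ : M →ₗ[ℂ] ℂ)
    (A B : Subalgebra ℂ M) : Prop :=
  ∀ (k : ℕ) (x : Fin k → M) (ι : Fin k → Bool), 0 < k →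
    (∀ j, if ι j then x j ∈ A else x j ∈ B) →
    (∀ j, τ (x j) = 0) →
    (∀ j : Fin k, ∀ h : (j : ℕ) + 1 < k, ι j ≠ ι ⟨(j : ℕ) + 1, h⟩) →
    τ (List.ofFn x).prod = 0

section FreeAux

variable {M : Type*} [Ring M] [Algebra ℂ M] {τ : M →ₗ[ℂ] ℂ}
    {A B : Subalgebra ℂ M}

lemma free_two (hfree : FreeIndep τ A B) {a b : M} (ha : a ∈ A) (hb : b ∈ B)
    (ha0 : τ a = 0) (hb0 : τ b = 0) :
    τ (a * b) = 0 := by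
  have := hfree 2 ![a, b] ![true, false] (by norm_num) ?_ ?_ ?_
  · simpa [mul_assoc] using this
  · intro j; fin_cases j <;> simpa
  · intro j; fin_cases j <;> simpa
  · intro j h
    have hd : ∀ i j' : Fin _, (i:ℕ)+1 = (j':ℕ) → ![true, false] i ≠ ![true, false] j' := by decide
    exact hd j ⟨(j:ℕ)+1, h⟩ rfl

lemma free_two' (hfree : FreeIndep τ A B) {a b : M} (ha : a ∈ A) (hb : b ∈ B)
    (ha0 : τ a = 0) (hb0 : τ b = 0) :
    τ (b * a) = 0 := by
  have := hfree 2 ![b, a] ![false, true] (by norm_num) ?_ ?_ ?_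
  · simpa [mul_assoc] using this
  · intro j; fin_cases j <;> simpa
  · intro j; fin_cases j <;> simpa
  · intro j h
    have hd : ∀ i j' : Fin _, (i:ℕ)+1 = (j':ℕ) → ![false, true] i ≠ ![false, true] j' := by decide
    exact hd j ⟨(j:ℕ)+1, h⟩ rfl

lemma free_aba (hfree : FreeIndep τ A B) {a b c : M} (ha : a ∈ A) (hb : b ∈ B) (hc : c ∈ A)
    (ha0 : τ a = 0) (hb0 : τ b = 0) (hc0 : τ c = 0) :
    τ (a * b * c) = 0 := by
  have := hfree 3 ![a, b, c] ![true, false, true] (by norm_num) ?_ ?_ ?_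
  · simpa [mul_assoc] using this
  · intro j; fin_cases j <;> simpa
  · intro j; fin_cases j <;> simpa
  · intro j h
    have hd : ∀ i j' : Fin _, (i:ℕ)+1 = (j':ℕ) →
        ![true, false, true] i ≠ ![true, false, true] j' := by decide
    exact hd j ⟨(j:ℕ)+1, h⟩ rfl

lemma free_bab (hfree : FreeIndep τ A B) {a b c : M} (ha : a ∈ B) (hb : b ∈ A) (hc : c ∈ B)
    (ha0 : τ a = 0) (hb0 : τ b = 0) (hc0 : τ c = 0) :
    τ (a * b * c) = 0 := by
  have := hfree 3 ![a, b, c] ![false, true, false] (by norm_num) ?_ ?_ ?_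
  · simpa [mul_assoc] using this
  · intro j; fin_cases j <;> simpa
  · intro j; fin_cases j <;> simpa
  · intro j h
    have hd : ∀ i j' : Fin _, (i:ℕ)+1 = (j':ℕ) →
        ![false, true, false] i ≠ ![false, true, false] j' := by decide
    exact hd j ⟨(j:ℕ)+1, h⟩ rfl

lemma free_abab (hfree : FreeIndep τ A B) {a b c d : M} (ha : a ∈ A) (hb : b ∈ B)
    (hc : c ∈ A) (hd : d ∈ B)
    (ha0 : τ a = 0) (hb0 : τ b = 0) (hc0 : τ c = 0) (hd0 : τ d = 0) :
    τ (a * b * c * d) = 0 := by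
  have := hfree 4 ![a, b, c, d] ![true, false, true, false] (by norm_num) ?_ ?_ ?_
  · simpa [mul_assoc] using this
  · intro j; fin_cases j <;> simpa
  · intro j; fin_cases j <;> simpa
  · intro j h
    have hd : ∀ i j' : Fin _, (i:ℕ)+1 = (j':ℕ) →
        ![true, false, true, false] i ≠ ![true, false, true, false] j' := by decide
    exact hd j ⟨(j:ℕ)+1, h⟩ rfl

end FreeAux

/-- A positive linear functional on a complex star algebra is hermitian. -/
lemma tau_star_eq_conj {M : Type*} [Ring M] [Algebra ℂ M] [StarRing M] [StarModule ℂ M]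
    (τ : M →ₗ[ℂ] ℂ)
    (hpos : ∀ a : M, 0 ≤ (τ (star a * a)).re ∧ (τ (star a * a)).im = 0)
    (a : M) : τ (star a) = (starRingEnd ℂ) (τ a) := by
  have key : ∀ b c : M, τ (star c * b) = (starRingEnd ℂ) (τ (star b * c)) := by
    intro b c
    set p := τ (star b * c) with hp
    set q := τ (star c * b) with hq
    have h1 : (p + q).im = 0 := by
      have e : star (b + c) * (b + c)
          = star b * b + (star b * c + star c * b) + star c * c := by
        simp only [star_add]; noncomm_ring
      have h := (hpos (b + c)).2
      rw [e] at h
      simp only [map_add, Complex.add_im, (hpos b).2, (hpos c).2] at h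
      simpa [hp, hq, Complex.add_im] using h
    have h2 : (p - q).re = 0 := by
      have e : star (b + Complex.I • c) * (b + Complex.I • c)
          = star b * b + (Complex.I • (star b * c) + (-Complex.I) • (star c * b))
            + star c * c := by
        simp only [star_add, add_mul, mul_add, star_smul, smul_mul_assoc,
          mul_smul_comm, smul_add, Complex.star_def, Complex.conj_I, smul_smul, neg_mul,
          Complex.I_mul_I, neg_neg, one_smul, neg_smul]
        match_scalars <;> simp [pow_two, Complex.I_mul_I]
      have h := (hpos (b + Complex.I • c)).2
      rw [e] at h
      simp only [map_add, map_smul, Complex.add_im, (hpos b).2,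
        (hpos c).2, smul_eq_mul, neg_mul, Complex.neg_im] at h
      have h' : (Complex.I * p - Complex.I * q).im = 0 := by
        rw [Complex.sub_im]; rw [hp, hq]; linarith [h]
      rw [← mul_sub] at h'
      simpa [Complex.mul_im] using h'
    have h1' : p.im + q.im = 0 := by simpa [Complex.add_im] using h1
    have h2' : p.re - q.re = 0 := by simpa [Complex.sub_re] using h2
    apply Complex.ext <;> simp [Complex.conj_re, Complex.conj_im] <;> linarith
  have := key 1 a
  simpa using this

/-- If u is a unitary *-free from N, E the τ-preserving conditional expectation onto N,
then for x, z ∈ N: E([z, u x u*]) = |τ(u)|²·[z, x]; in particular it vanishes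
when z commutes with x. -/
theorem condExp_commutator_unitary_conjugation
    {M : Type*} [Ring M] [Algebra ℂ M] [StarRing M] [StarModule ℂ M]
    (τ : M →ₗ[ℂ] ℂ)
    (hτ1 : τ 1 = 1) (htr : ∀ a b : M, τ (a * b) = τ (b * a))
    (hpos : ∀ a : M, 0 ≤ (τ (star a * a)).re ∧ (τ (star a * a)).im = 0)
    (hfaithful : ∀ a : M, τ (star a * a) = 0 → a = 0)
    (N : StarSubalgebra ℂ M)
    (u : M) (hu : star u * u = 1) (hu' : u * star u = 1)
    (hfree : FreeIndep τ (StarAlgebra.adjoin ℂ {u}).toSubalgebra N.toSubalgebra)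
    (E : M →ₗ[ℂ] M) (hEmem : ∀ m, E m ∈ N)
    (hEcond : ∀ m : M, ∀ y ∈ N, τ (E m * y) = τ (m * y))
    (x z : M) (hx : x ∈ N) (hz : z ∈ N) :
    E (z * (u * x * star u) - (u * x * star u) * z) =
        ((‖τ u‖ ^ 2 : ℝ) : ℂ) • (z * x - x * z) ∧
      (z * x = x * z → E (z * (u * x * star u) - (u * x * star u) * z) = 0) := by
  set A := (StarAlgebra.adjoin ℂ {u}).toSubalgebra with hA
  -- memberships
  have huA : u ∈ A := StarSubalgebra.mem_toSubalgebra.mpr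
    (StarAlgebra.subset_adjoin ℂ {u} (Set.mem_singleton u))
  have hsuA : star u ∈ A := StarSubalgebra.mem_toSubalgebra.mpr
    (star_mem (StarAlgebra.subset_adjoin ℂ {u} (Set.mem_singleton u)))
  -- centered elements
  set α : ℂ := τ u with hα
  set β : ℂ := τ (star u) with hβ
  set s : ℂ := τ x with hs
  set u0 : M := u - α • 1 with hu0
  set v0 : M := star u - β • 1 with hv0
  set x0 : M := x - s • 1 with hx0
  have hu0A : u0 ∈ A := sub_mem huA (SMulMemClass.smul_mem _ (one_mem _))
  have hv0A : v0 ∈ A := sub_mem hsuA (SMulMemClass.smul_mem _ (one_mem _))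
  have hxB : x ∈ N.toSubalgebra := hx
  have hx0B : x0 ∈ N.toSubalgebra := sub_mem hxB (SMulMemClass.smul_mem _ (one_mem _))
  have hτu0 : τ u0 = 0 := by simp [hu0, hτ1, hα]
  have hτv0 : τ v0 = 0 := by simp [hv0, hτ1, hβ]
  have hτx0 : τ x0 = 0 := by simp [hx0, hτ1, hs]
  have huv : τ (u0 * v0) = 1 - α * β := by
    simp only [hu0, hv0, sub_mul, mul_sub, smul_mul_assoc, mul_smul_comm, smul_smul,
      mul_one, one_mul, hu', map_sub, map_smul, smul_eq_mul, hτ1, ← hα, ← hβ]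
    ring
  -- the fourth moment formula
  have K : ∀ y : M, y ∈ N → τ (u * x * star u * y)
      = s * τ y + (α * β) * (τ (x * y) - s * τ y) := by
    intro y hy
    set t : ℂ := τ y with ht
    set y0 : M := y - t • 1 with hy0
    have hyB : y ∈ N.toSubalgebra := hy
    have hy0B : y0 ∈ N.toSubalgebra := sub_mem hyB (SMulMemClass.smul_mem _ (one_mem _))
    have hτy0 : τ y0 = 0 := by simp [hy0, hτ1, ht]
    have V1 : τ (v0 * y0) = 0 := free_two hfree hv0A hy0B hτv0 hτy0
    have V3 : τ (x0 * v0) = 0 := free_two' hfree hv0A hx0B hτv0 hτx0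
    have V4 : τ (x0 * v0 * y0) = 0 := free_bab hfree hx0B hv0A hy0B hτx0 hτv0 hτy0
    have V5 : τ (u0 * y0) = 0 := free_two hfree hu0A hy0B hτu0 hτy0
    have V7 : τ (u0 * x0) = 0 := free_two hfree hu0A hx0B hτu0 hτx0
    have V9 : τ (u0 * x0 * v0) = 0 := free_aba hfree hu0A hx0B hv0A hτu0 hτx0 hτv0
    have V10 : τ (u0 * x0 * v0 * y0) = 0 :=
      free_abab hfree hu0A hx0B hv0A hy0B hτu0 hτx0 hτv0 hτy0
    have V6 : τ (u0 * v0 * y0) = 0 := by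
      have hcA : u0 * v0 - τ (u0 * v0) • 1 ∈ A :=
        sub_mem (mul_mem hu0A hv0A) (SMulMemClass.smul_mem _ (one_mem _))
      have hc0 : τ (u0 * v0 - τ (u0 * v0) • 1) = 0 := by simp [hτ1]
      have hc := free_two hfree hcA hy0B hc0 hτy0
      have e : (u0 * v0 - τ (u0 * v0) • 1) * y0 = u0 * v0 * y0 - τ (u0 * v0) • y0 := by
        simp [sub_mul, smul_mul_assoc]
      rw [e, map_sub, map_smul, smul_eq_mul, hτy0, mul_zero, sub_zero] at hc
      exact hc
    have V8 : τ (u0 * x0 * y0) = 0 := by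
      have hdB : x0 * y0 - τ (x0 * y0) • 1 ∈ N.toSubalgebra :=
        sub_mem (mul_mem hx0B hy0B) (SMulMemClass.smul_mem _ (one_mem _))
      have hd0 : τ (x0 * y0 - τ (x0 * y0) • 1) = 0 := by simp [hτ1]
      have hc := free_two hfree hu0A hdB hτu0 hd0
      have e : u0 * (x0 * y0 - τ (x0 * y0) • 1) = u0 * x0 * y0 - τ (x0 * y0) • u0 := by
        simp [mul_sub, mul_smul_comm, mul_assoc]
      rw [e, map_sub, map_smul, smul_eq_mul, hτu0, mul_zero, sub_zero] at hc
      exact hc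
    have hxy : τ (x0 * y0) = τ (x * y) - s * t := by
      simp only [hx0, hy0, sub_mul, mul_sub, smul_mul_assoc, mul_smul_comm, smul_smul,
        mul_one, one_mul, map_sub, map_smul, smul_eq_mul, hτ1, ← hs, ← ht]
      ring
    have hu_eq : u = α • 1 + u0 := by rw [hu0]; abel
    have hsu_eq : star u = β • 1 + v0 := by rw [hv0]; abel
    have hx_eq : x = s • 1 + x0 := by rw [hx0]; abel
    have hy_eq : y = t • 1 + y0 := by rw [hy0]; abel
    calc τ (u * x * star u * y)
        = τ ((α • 1 + u0) * (s • 1 + x0) * ((β • 1 + v0)) * ((t • 1 + y0))) := by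
          rw [← hu_eq, ← hsu_eq, ← hx_eq, ← hy_eq]
      _ = s * t + (α * β) * (τ (x * y) - s * t) := by
          simp only [mul_add, add_mul, smul_mul_assoc, mul_smul_comm, smul_smul,
            mul_one, one_mul, ← mul_assoc, map_add, map_smul, smul_eq_mul]
          rw [hτ1, hτu0, hτx0, hτv0, hτy0, V1, V3, V4, V5, V6, V7, V8, V9, V10, huv, hxy]
          ring
  -- uniqueness from faithfulness
  have huniq : ∀ a b : M, a ∈ N → b ∈ N → (∀ y ∈ N, τ (a * y) = τ (b * y)) → a = b := by
    intro a b haN hbN h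
    have hst : star (a - b) ∈ N := star_mem (sub_mem haN hbN)
    have h0 : τ ((a - b) * star (a - b)) = 0 := by
      rw [sub_mul, map_sub, h _ hst, sub_self]
    have := hfaithful (a - b) (by rw [htr]; exact h0)
    exact sub_eq_zero.mp this
  -- |τ u|² = α β
  have hherm : τ (star u) = (starRingEnd ℂ) (τ u) := tau_star_eq_conj τ hpos u
  have hαβ : ((‖τ u‖ ^ 2 : ℝ) : ℂ) = α * β := by
    rw [hβ, hherm, hα, Complex.mul_conj, Complex.sq_norm]
  set w : M := u * x * star u with hw
  have hmain : E (z * w - w * z) = ((‖τ u‖ ^ 2 : ℝ) : ℂ) • (z * x - x * z) := by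
    apply huniq _ _ (hEmem _)
      (SMulMemClass.smul_mem _ (sub_mem (mul_mem hz hx) (mul_mem hx hz)))
    intro y hy
    rw [hEcond _ y hy]
    have l1 : τ ((z * w - w * z) * y) = τ (w * (y * z)) - τ (w * (z * y)) := by
      have e : (z * w - w * z) * y = z * (w * y) - w * (z * y) := by noncomm_ring
      rw [e, map_sub, htr z (w * y), mul_assoc]
    have l2 := K (y * z) (mul_mem hy hz)
    have l3 := K (z * y) (mul_mem hz hy)
    have l4 : τ (y * z) = τ (z * y) := htr y z
    have m1 : τ (x * (y * z)) = τ (x * y * z) := (congrArg τ (mul_assoc x y z)).symm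
    have m2 : τ (x * (z * y)) = τ (x * z * y) := (congrArg τ (mul_assoc x z y)).symm
    have l5 : τ (((‖τ u‖ ^ 2 : ℝ) : ℂ) • (z * x - x * z) * y)
        = (α * β) * (τ (x * y * z) - τ (x * z * y)) := by
      rw [smul_mul_assoc, map_smul, smul_eq_mul, hαβ]
      have e : (z * x - x * z) * y = z * (x * y) - x * z * y := by noncomm_ring
      rw [e, map_sub, htr z (x * y)]
    rw [l1, l2, l3, l4, m1, m2, l5]
    ring
  refine ⟨hmain, fun hcomm => ?_⟩
  rw [hmain, hcomm, sub_self, smul_zero]
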